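/- (Proposition 2 of the paper.) Let pow₁ := ⌊(n−t−1)/(k−1)⌋ = max{u : t + (k−1)u ≤ n−1}. For every j with 1 ≤ j ≤ pow₁ and every u with t + (k−1)j + 1 ≤ u ≤ n−1, the coefficient of X^u in the polynomial (Λ·R^j mod G) ∈ A[X] — which is a polynomial of total degree ≤ 1 in the variables λ₀,…,λ_{t−1} — belongs to the subspace I₂. (These are exactly the affine equations produced by Algorithm 1 run with D = 2, i.e. the power-decoding equations.) -/

import Mathlib

open Polynomial

noncomputable def Lam (F : Type*) [CommRing F] (t k : ℕ) :
    Polynomial (MvPolynomial (Fin t ⊕ Fin k) F) :=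
  X ^ t + ∑ j : Fin t, C (MvPolynomial.X (Sum.inl j)) * X ^ (j : ℕ)

noncomputable def Pp (F : Type*) [CommRing F] (t k : ℕ) :
    Polynomial (MvPolynomial (Fin t ⊕ Fin k) F) :=
  ∑ i : Fin k, C (MvPolynomial.X (Sum.inr i)) * X ^ (i : ℕ)

noncomputable def liftP (F : Type*) [CommRing F] (t k : ℕ) (f : Polynomial F) :
    Polynomial (MvPolynomial (Fin t ⊕ Fin k) F) :=
  f.map MvPolynomial.C

section Aux

variable {F : Type*} [Field F] {t k : ℕ}

lemma coeff_Lam (a : ℕ) : (Lam F t k).coeff a =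
    (if a = t then 1 else 0) +
      (if h : a < t then MvPolynomial.X (Sum.inl (⟨a, h⟩ : Fin t)) else 0) := by
  rw [Lam, coeff_add, coeff_X_pow, finset_sum_coeff]
  congr 1
  simp only [coeff_C_mul, coeff_X_pow, mul_ite, mul_one, mul_zero]
  split_ifs with h
  · rw [Finset.sum_eq_single_of_mem (⟨a, h⟩ : Fin t) (Finset.mem_univ _)]
    · rw [if_pos rfl]
    · intro j _ hj
      exact if_neg fun haj => hj (Fin.ext haj.symm)
  · exact Finset.sum_eq_zero fun j _ => if_neg fun haj => h (haj.trans_lt j.isLt)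

lemma coeff_Pp (b : ℕ) : (Pp F t k).coeff b =
    (if h : b < k then MvPolynomial.X (Sum.inr (⟨b, h⟩ : Fin k)) else 0) := by
  rw [Pp, finset_sum_coeff]
  simp only [coeff_C_mul, coeff_X_pow, mul_ite, mul_one, mul_zero]
  split_ifs with h
  · rw [Finset.sum_eq_single_of_mem (⟨b, h⟩ : Fin k) (Finset.mem_univ _)]
    · rw [if_pos rfl]
    · intro j _ hj
      exact if_neg fun hbj => hj (Fin.ext hbj.symm)
  · exact Finset.sum_eq_zero fun j _ => if_neg fun hbj => h (hbj.trans_lt j.isLt)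

lemma td_coeff_Lam (a : ℕ) : ((Lam F t k).coeff a).totalDegree ≤ 1 := by
  rw [coeff_Lam]
  refine (MvPolynomial.totalDegree_add _ _).trans (max_le ?_ ?_) <;>
    split_ifs <;>
    simp [MvPolynomial.totalDegree_X, MvPolynomial.totalDegree_one,
      MvPolynomial.totalDegree_zero]

lemma natDegree_Lam_le : (Lam F t k).natDegree ≤ t := by
  refine natDegree_le_iff_coeff_eq_zero.2 fun N hN => ?_
  rw [coeff_Lam, if_neg (by omega), dif_neg (by omega), add_zero]

lemma natDegree_Pp_le (hk : 1 ≤ k) : (Pp F t k).natDegree ≤ k - 1 := by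
  refine natDegree_le_iff_coeff_eq_zero.2 fun N hN => ?_
  rw [coeff_Pp, dif_neg (by omega)]

lemma liftP_pow (f : Polynomial F) (j : ℕ) :
    liftP F t k f ^ j = liftP F t k (f ^ j) := by
  simp [liftP, Polynomial.map_pow]

lemma coeff_modByMonic_mem (W : Submodule F (MvPolynomial (Fin t ⊕ Fin k) F))
    {g : Polynomial F} (hg : g.Monic)
    (f : Polynomial (MvPolynomial (Fin t ⊕ Fin k) F))
    (hf : ∀ w, f.coeff w ∈ W) (u : ℕ) :
    ((f %ₘ liftP F t k g).coeff u) ∈ W := by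
  have h2 : ∀ i : ℕ, (X : Polynomial (MvPolynomial (Fin t ⊕ Fin k) F)) ^ i %ₘ liftP F t k g
      = liftP F t k ((X : Polynomial F) ^ i %ₘ g) := by
    intro i
    rw [liftP, liftP, map_modByMonic _ hg, Polynomial.map_pow, map_X]
  have key : ∀ s : Finset ℕ,
      ((∑ i ∈ s, Polynomial.C (f.coeff i) * X ^ i) %ₘ liftP F t k g)
        = ∑ i ∈ s, Polynomial.C (f.coeff i) * (X ^ i %ₘ liftP F t k g) := by
    intro s
    induction s using Finset.induction_on with
    | empty => simp [zero_modByMonic]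
    | insert _ _ h ih =>
      rw [Finset.sum_insert h, Finset.sum_insert h, add_modByMonic, ih]
      congr 1
      rw [← smul_eq_C_mul, ← smul_eq_C_mul, smul_modByMonic]
  rw [f.as_sum_support_C_mul_X_pow]
  rw [key, finset_sum_coeff]
  refine Submodule.sum_mem _ fun i _ => ?_
  rw [h2 i, liftP, coeff_C_mul, Polynomial.coeff_map, mul_comm,
    ← MvPolynomial.smul_eq_C_mul]
  exact Submodule.smul_mem _ _ (hf i)

def affSub (F : Type*) [Field F] (t k : ℕ) : Submodule F (MvPolynomial (Fin t ⊕ Fin k) F) where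
  carrier := {x | x.totalDegree ≤ 1}
  add_mem' := fun ha hb => le_trans (MvPolynomial.totalDegree_add _ _) (max_le ha hb)
  zero_mem' := by simp [Set.mem_setOf_eq, MvPolynomial.totalDegree_zero]
  smul_mem' := fun c x hx => le_trans (MvPolynomial.totalDegree_smul_le c x) hx

lemma mem_affSub {x : MvPolynomial (Fin t ⊕ Fin k) F} :
    x ∈ affSub F t k ↔ x.totalDegree ≤ 1 := Iff.rfl

lemma affine_coeffs (f : Polynomial F) {g : Polynomial F} (hg : g.Monic) (u : ℕ) :
    (((Lam F t k * liftP F t k f) %ₘ liftP F t k g).coeff u).totalDegree ≤ 1 := by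
  rw [← mem_affSub]
  refine coeff_modByMonic_mem (affSub F t k) hg _ (fun w => ?_) u
  rw [coeff_mul]
  refine Submodule.sum_mem _ fun c _ => ?_
  rw [mem_affSub]
  refine (MvPolynomial.totalDegree_mul _ _).trans ?_
  have h1 : ((liftP F t k f).coeff c.2).totalDegree = 0 := by
    rw [liftP, Polynomial.coeff_map, MvPolynomial.totalDegree_C]
  rw [h1, add_zero]
  exact td_coeff_Lam c.1

end Aux
noncomputable def ID (F : Type*) [Field F] (t k : ℕ) (R G : Polynomial F) (D : ℕ) :
    Submodule F (MvPolynomial (Fin t ⊕ Fin k) F) :=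
  sInf {W : Submodule F (MvPolynomial (Fin t ⊕ Fin k) F) |
    (Set.range (Lam F t k * Pp F t k - (Lam F t k * liftP F t k R) %ₘ liftP F t k G).coeff) ⊆ W ∧
    ∀ f ∈ W, ∀ d : (Fin t ⊕ Fin k) →₀ ℕ,
      ((MvPolynomial.monomial d (1 : F)) * f).totalDegree ≤ D →
      (MvPolynomial.monomial d (1 : F)) * f ∈ W}

section IDAux

variable {F : Type*} [Field F] {t k : ℕ}

lemma ID_gen_mem (R G : Polynomial F) (D u : ℕ) :
    (Lam F t k * Pp F t k - (Lam F t k * liftP F t k R) %ₘ liftP F t k G).coeff u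
      ∈ ID F t k R G D :=
  Submodule.mem_sInf.2 fun _ hW => hW.1 ⟨u, rfl⟩

lemma ID_mul_mem {R G : Polynomial F} {D : ℕ} {f : MvPolynomial (Fin t ⊕ Fin k) F}
    (hf : f ∈ ID F t k R G D) (d : (Fin t ⊕ Fin k) →₀ ℕ)
    (hd : ((MvPolynomial.monomial d (1 : F)) * f).totalDegree ≤ D) :
    (MvPolynomial.monomial d (1 : F)) * f ∈ ID F t k R G D :=
  Submodule.mem_sInf.2 fun W hW => hW.2 f (Submodule.mem_sInf.1 hf W hW) d hd

end IDAux

theorem stmt2 (F : Type*) [Field F] (n t k : ℕ) (hn : 0 < n) (ht : 1 ≤ t) (hk : 2 ≤ k)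
    (htk : t + k - 1 ≤ n - 1)
    (a b : Fin n → F) (ha : Function.Injective a)
    (G : Polynomial F) (hG : G = ∏ ℓ : Fin n, (X - C (a ℓ)))
    (R : Polynomial F) (hRdeg : R.degree < n) (hR : ∀ ℓ, R.eval (a ℓ) = b ℓ) :
    ∀ j : ℕ, 1 ≤ j → j ≤ (n - t - 1) / (k - 1) →
      ∀ u : ℕ, t + (k - 1) * j + 1 ≤ u → u ≤ n - 1 →
        (((Lam F t k * liftP F t k R ^ j) %ₘ liftP F t k G).coeff u).totalDegree ≤ 1 ∧
        ((Lam F t k * liftP F t k R ^ j) %ₘ liftP F t k G).coeff u ∈ ID F t k R G 2 := by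
  classical
  have hGmonic : G.Monic := by
    rw [hG]; exact monic_prod_of_monic _ _ fun i _ => monic_X_sub_C _
  have hGdeg : G.natDegree = n := by
    rw [hG, natDegree_prod _ _ fun i _ => X_sub_C_ne_zero (a i)]
    simp [natDegree_X_sub_C]
  have hGlmonic : (liftP F t k G).Monic := hGmonic.map _
  have hGldeg : (liftP F t k G).degree = (n : WithBot ℕ) := by
    rw [liftP, hGmonic.degree_map, degree_eq_natDegree hGmonic.ne_zero, hGdeg]
  have haff : ∀ j u : ℕ,
      (((Lam F t k * liftP F t k R ^ j) %ₘ liftP F t k G).coeff u).totalDegree ≤ 1 := by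
    intro j u
    rw [liftP_pow]
    exact affine_coeffs _ hGmonic u
  have key : ∀ j : ℕ, 1 ≤ j → t + (k - 1) * j ≤ n - 1 →
      ∀ u : ℕ, t + (k - 1) * j + 1 ≤ u →
        ((Lam F t k * liftP F t k R ^ j) %ₘ liftP F t k G).coeff u ∈ ID F t k R G 2 := by
    intro j
    induction j with
    | zero => omega
    | succ j ih =>
      intro _ hbound u hu
      have hksub : (k - 1) * (j + 1) = (k - 1) * j + (k - 1) := by ring
      rcases Nat.eq_zero_or_pos j with hj0 | hj1
      · -- base case j + 1 = 1
        subst hj0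
        have hcoeffLP : (Lam F t k * Pp F t k).coeff u = 0 := by
          apply coeff_eq_zero_of_natDegree_lt
          have h1 : (Lam F t k * Pp F t k).natDegree ≤ t + (k - 1) :=
            natDegree_mul_le.trans (add_le_add natDegree_Lam_le (natDegree_Pp_le (by omega)))
          omega
        have hmem := ID_gen_mem (t := t) (k := k) R G 2 u
        rw [coeff_sub, hcoeffLP, zero_sub] at hmem
        rw [pow_one]
        exact neg_mem_iff.1 hmem
      · -- inductive step
        have hbj : t + (k - 1) * j ≤ n - 1 := by omega
        set Sj := (Lam F t k * liftP F t k R ^ j) %ₘ liftP F t k G with hSj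
        set E := Lam F t k * Pp F t k - (Lam F t k * liftP F t k R) %ₘ liftP F t k G with hE
        have h1 := modByMonic_add_div (Lam F t k * liftP F t k R ^ j) (liftP F t k G)
        have h2 := modByMonic_add_div (Lam F t k * liftP F t k R) (liftP F t k G)
        have hdvd : Sj * Pp F t k - liftP F t k R ^ j * E
            = Lam F t k * liftP F t k R ^ (j + 1)
              + liftP F t k G *
                (-(((Lam F t k * liftP F t k R ^ j) /ₘ liftP F t k G) * Pp F t k)
                  - ((Lam F t k * liftP F t k R) /ₘ liftP F t k G) * liftP F t k R ^ j) := by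
          rw [hSj, hE]
          linear_combination (Pp F t k) * h1 + (liftP F t k R ^ j) * h2
        have hid : (Lam F t k * liftP F t k R ^ (j + 1)) %ₘ liftP F t k G
            = (Sj * Pp F t k) %ₘ liftP F t k G
              - (liftP F t k R ^ j * E) %ₘ liftP F t k G := by
          rw [← sub_modByMonic, hdvd, add_modByMonic,
            (modByMonic_eq_zero_iff_dvd hGlmonic).2 (dvd_mul_right _ _), add_zero]
        rw [hid, coeff_sub]
        refine Submodule.sub_mem _ ?_ ?_
        · -- (Sj * P) %ₘ G part
          set m := t + (k - 1) * j with hm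
          set Hp := ∑ v ∈ Finset.Ico (m + 1) n, Polynomial.C (Sj.coeff v) * X ^ v with hHp
          have hHpcoeff : ∀ w, Hp.coeff w
              = if w ∈ Finset.Ico (m + 1) n then Sj.coeff w else 0 := by
            intro w
            rw [hHp, finset_sum_coeff]
            simp only [coeff_C_mul, coeff_X_pow, mul_ite, mul_one, mul_zero]
            by_cases hw : w ∈ Finset.Ico (m + 1) n
            · rw [if_pos hw, Finset.sum_eq_single_of_mem w hw (fun v _ hv => if_neg (Ne.symm hv)),
                if_pos rfl]
            · rw [if_neg hw]
              exact Finset.sum_eq_zero fun v hv => if_neg fun h => hw (by rw [h]; exact hv)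
          have hSjdeg : ∀ w, n ≤ w → Sj.coeff w = 0 := by
            intro w hw
            apply coeff_eq_zero_of_degree_lt
            calc Sj.degree < (liftP F t k G).degree := degree_modByMonic_lt _ hGlmonic
              _ = (n : WithBot ℕ) := hGldeg
              _ ≤ (w : WithBot ℕ) := by exact_mod_cast hw
          have hLp : ∀ w, m < w → (Sj - Hp).coeff w = 0 := by
            intro w hw
            rw [coeff_sub, hHpcoeff]
            by_cases hwn : w < n
            · rw [if_pos (Finset.mem_Ico.2 ⟨hw, hwn⟩), sub_self]
            · rw [if_neg fun hmem => hwn (Finset.mem_Ico.1 hmem).2, hSjdeg w (by omega), sub_zero]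
          have hLpdeg : (Sj - Hp).natDegree ≤ m := natDegree_le_iff_coeff_eq_zero.2 hLp
          have hsplit : Sj * Pp F t k = (Sj - Hp) * Pp F t k + Hp * Pp F t k := by ring
          rw [hsplit, add_modByMonic, coeff_add]
          have hdegLpP : ((Sj - Hp) * Pp F t k).natDegree ≤ m + (k - 1) :=
            natDegree_mul_le.trans (add_le_add hLpdeg (natDegree_Pp_le (by omega)))
          have hLpP : (((Sj - Hp) * Pp F t k) %ₘ liftP F t k G).coeff u = 0 := by
            have hlt : ((Sj - Hp) * Pp F t k).degree < (liftP F t k G).degree := by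
              rw [hGldeg]
              calc ((Sj - Hp) * Pp F t k).degree
                  ≤ (((Sj - Hp) * Pp F t k).natDegree : WithBot ℕ) := degree_le_natDegree
                _ ≤ ((m + (k - 1) : ℕ) : WithBot ℕ) := by exact_mod_cast hdegLpP
                _ < (n : WithBot ℕ) := by exact_mod_cast (by omega : m + (k - 1) < n)
            rw [(modByMonic_eq_self_iff hGlmonic).2 hlt]
            exact coeff_eq_zero_of_natDegree_lt (by omega)
          rw [hLpP, zero_add]
          refine coeff_modByMonic_mem _ hGmonic _ (fun w => ?_) u
          rw [coeff_mul]
          refine Submodule.sum_mem _ fun c _ => ?_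
          rw [hHpcoeff]
          by_cases h1mem : c.1 ∈ Finset.Ico (m + 1) n
          · rw [if_pos h1mem, coeff_Pp]
            by_cases h2k : c.2 < k
            · rw [dif_pos h2k]
              have hs : Sj.coeff c.1 ∈ ID F t k R G 2 :=
                ih (by omega) hbj c.1 (Finset.mem_Ico.1 h1mem).1
              have hdeg1 : (Sj.coeff c.1).totalDegree ≤ 1 := haff j c.1
              rw [mul_comm]
              have hXmon : (MvPolynomial.X (Sum.inr (⟨c.2, h2k⟩ : Fin k)) :
                    MvPolynomial (Fin t ⊕ Fin k) F)
                  = MvPolynomial.monomial (Finsupp.single (Sum.inr (⟨c.2, h2k⟩ : Fin k)) 1)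
                    (1 : F) := rfl
              rw [hXmon]
              refine ID_mul_mem hs _ ?_
              rw [← hXmon]
              calc (MvPolynomial.X (Sum.inr (⟨c.2, h2k⟩ : Fin k)) * Sj.coeff c.1).totalDegree
                  ≤ (MvPolynomial.X (σ := Fin t ⊕ Fin k) (R := F)
                      (Sum.inr (⟨c.2, h2k⟩ : Fin k))).totalDegree
                    + (Sj.coeff c.1).totalDegree := MvPolynomial.totalDegree_mul _ _
                _ ≤ 1 + 1 := by
                    rw [MvPolynomial.totalDegree_X]
                    omega
                _ = 2 := rfl
            · rw [dif_neg h2k, mul_zero]; exact Submodule.zero_mem _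
          · rw [if_neg h1mem, zero_mul]; exact Submodule.zero_mem _
        · -- (R^j * E) %ₘ G part
          refine coeff_modByMonic_mem _ hGmonic _ (fun w => ?_) u
          rw [coeff_mul]
          refine Submodule.sum_mem _ fun c _ => ?_
          rw [liftP_pow, liftP, Polynomial.coeff_map, ← MvPolynomial.smul_eq_C_mul]
          exact Submodule.smul_mem _ _ (hE ▸ ID_gen_mem R G 2 c.2)
  intro j hj hjle u hu hun
  refine ⟨haff j u, ?_⟩
  have hdivle : (k - 1) * ((n - t - 1) / (k - 1)) ≤ n - t - 1 := Nat.mul_div_le _ _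
  have hmul : (k - 1) * j ≤ (k - 1) * ((n - t - 1) / (k - 1)) :=
    Nat.mul_le_mul_left _ hjle
  exact key j hj (by omega) u hu
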